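/- For all Borel sets A0, A1 ⊆ Z and every Borel set B ⊆ Z containing M(A0 × A1) = {(x+y)/2 : x ∈ A0, y ∈ A1}, one has μ_{1/2}(A0 ∪ B ∪ A1) ≥ μ0(A0) + μ1(A1) − 1. -/

import Mathlib

open MeasureTheory
open scoped ENNReal

/-- The midpoint map `M(x,y) = (x+y)/2` on a real normed space. -/
noncomputable def midMap {Z : Type*} [NormedAddCommGroup Z] [NormedSpace ℝ Z]
    (p : Z × Z) : Z := (2⁻¹ : ℝ) • (p.1 + p.2)

/-- The measure `μ_{1/2} := M_*π + (1/2)(μ0 − (pr0)_*π) + (1/2)(μ1 − (pr1)_*π)`. -/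
noncomputable def muHalf {Z : Type*} [NormedAddCommGroup Z] [NormedSpace ℝ Z]
    [MeasurableSpace Z] (μ0 μ1 : Measure Z) (π : Measure (Z × Z)) : Measure Z :=
  π.map midMap + (2⁻¹ : ℝ≥0∞) • (μ0 - π.map Prod.fst)
    + (2⁻¹ : ℝ≥0∞) • (μ1 - π.map Prod.snd)

/-- Let `Z` be a separable real Banach space, `μ0`, `μ1` Borel probability measures on
`Z`, and `π` a Borel measure on `Z × Z` with `(pr0)_*π ≤ μ0`, `(pr1)_*π ≤ μ1`. For all
Borel sets `A0, A1 ⊆ Z` and every Borel set `B ⊆ Z` containing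
`M(A0 × A1) = {(x+y)/2 : x ∈ A0, y ∈ A1}`, the measure `μ_{1/2}` satisfies
`μ_{1/2}(A0 ∪ B ∪ A1) ≥ μ0(A0) + μ1(A1) − 1`. -/
theorem muHalf_union_lower_bound
    (Z : Type*) [NormedAddCommGroup Z] [NormedSpace ℝ Z] [CompleteSpace Z]
    [SecondCountableTopology Z] [MeasurableSpace Z] [BorelSpace Z]
    (μ0 μ1 : Measure Z) [IsProbabilityMeasure μ0] [IsProbabilityMeasure μ1]
    (π : Measure (Z × Z))
    (hπ0 : π.map Prod.fst ≤ μ0) (hπ1 : π.map Prod.snd ≤ μ1)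
    (A0 A1 B : Set Z) (hA0 : MeasurableSet A0) (hA1 : MeasurableSet A1)
    (hB : MeasurableSet B) (hMB : midMap '' (A0 ×ˢ A1) ⊆ B) :
    (μ0 A0).toReal + (μ1 A1).toReal - 1 ≤ (muHalf μ0 μ1 π (A0 ∪ B ∪ A1)).toReal := by
  classical
  have hmid : Measurable (midMap (Z := Z)) := by
    have : Continuous (midMap (Z := Z)) := by
      unfold midMap
      exact (continuous_fst.add continuous_snd).const_smul _
    exact this.measurable
  set ν0 : Measure Z := π.map Prod.fst with hν0
  set ν1 : Measure Z := π.map Prod.snd with hν1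
  have hν0univ : ν0 Set.univ = π Set.univ := by
    rw [hν0, Measure.map_apply measurable_fst MeasurableSet.univ]; rfl
  have hν1univ : ν1 Set.univ = π Set.univ := by
    rw [hν1, Measure.map_apply measurable_snd MeasurableSet.univ]; rfl
  have hπuniv : π Set.univ ≤ 1 := by
    have h := hπ0 Set.univ
    rw [← hν0univ]
    simpa using h
  haveI : IsFiniteMeasure π := ⟨lt_of_le_of_lt hπuniv (by norm_num)⟩
  haveI : IsFiniteMeasure ν0 := by rw [hν0]; infer_instance
  haveI : IsFiniteMeasure ν1 := by rw [hν1]; infer_instance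
  set S : Set Z := A0 ∪ B ∪ A1 with hSdef
  have hSmeas : MeasurableSet S := (hA0.union hB).union hA1
  -- evaluation of muHalf at S
  have hval : muHalf μ0 μ1 π S
      = π.map midMap S + 2⁻¹ * ((μ0 - ν0) S) + 2⁻¹ * ((μ1 - ν1) S) := by
    simp [muHalf, Measure.add_apply, Measure.smul_apply, smul_eq_mul, hν0, hν1]
  -- lower bounds on the three terms
  have h1 : π (A0 ×ˢ A1) ≤ π.map midMap S := by
    rw [Measure.map_apply hmid hSmeas]
    refine measure_mono ?_
    intro p hp
    exact Or.inl (Or.inr (hMB ⟨p, hp, rfl⟩))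
  have h2 : (μ0 - ν0) A0 ≤ (μ0 - ν0) S :=
    measure_mono (fun x hx => Or.inl (Or.inl hx))
  have h3 : (μ1 - ν1) A1 ≤ (μ1 - ν1) S :=
    measure_mono (fun x hx => Or.inr hx)
  have hsub0 : ∀ t : Set Z, MeasurableSet t → (μ0 - ν0) t = μ0 t - ν0 t :=
    fun t ht => Measure.sub_apply ht hπ0
  have hsub1 : ∀ t : Set Z, MeasurableSet t → (μ1 - ν1) t = μ1 t - ν1 t :=
    fun t ht => Measure.sub_apply ht hπ1
  -- real quantities
  set a : ℝ := (μ0 A0).toReal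
  set b : ℝ := (μ1 A1).toReal
  set e : ℝ := (ν0 A0).toReal
  set f : ℝ := (ν1 A1).toReal
  set m : ℝ := (π Set.univ).toReal
  set p : ℝ := (π (A0 ×ˢ A1)).toReal
  have hμ0A0ne : μ0 A0 ≠ ⊤ := measure_ne_top _ _
  have hμ1A1ne : μ1 A1 ≠ ⊤ := measure_ne_top _ _
  have hea : ν0 A0 ≤ μ0 A0 := hπ0 A0
  have hfb : ν1 A1 ≤ μ1 A1 := hπ1 A1
  have heaR : e ≤ a := ENNReal.toReal_mono hμ0A0ne hea
  have hfbR : f ≤ b := ENNReal.toReal_mono hμ1A1ne hfb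
  have ha1 : a ≤ 1 := by
    have := prob_le_one (μ := μ0) (s := A0)
    simpa [a] using ENNReal.toReal_mono (by simp) this
  have hb1 : b ≤ 1 := by
    have := prob_le_one (μ := μ1) (s := A1)
    simpa [b] using ENNReal.toReal_mono (by simp) this
  -- a - e ≤ 1 - m
  have ham : a - e ≤ 1 - m := by
    have h := measure_mono (μ := μ0 - ν0) (Set.subset_univ A0)
    rw [hsub0 A0 hA0, hsub0 Set.univ MeasurableSet.univ] at h
    have h' := ENNReal.toReal_mono (by
      exact ENNReal.sub_ne_top (by simp)) h
    rw [ENNReal.toReal_sub_of_le hea hμ0A0ne,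
      ENNReal.toReal_sub_of_le (hπ0 Set.univ) (by simp), hν0univ] at h'
    simpa [a, e, m] using h'
  have hbm : b - f ≤ 1 - m := by
    have h := measure_mono (μ := μ1 - ν1) (Set.subset_univ A1)
    rw [hsub1 A1 hA1, hsub1 Set.univ MeasurableSet.univ] at h
    have h' := ENNReal.toReal_mono (by
      exact ENNReal.sub_ne_top (by simp)) h
    rw [ENNReal.toReal_sub_of_le hfb hμ1A1ne,
      ENNReal.toReal_sub_of_le (hπ1 Set.univ) (by simp), hν1univ] at h'
    simpa [b, f, m] using h'
  -- e + f ≤ p + m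
  have hef : e + f ≤ p + m := by
    have hE : MeasurableSet (Prod.fst ⁻¹' A0 : Set (Z × Z)) := measurable_fst hA0
    have hF : MeasurableSet (Prod.snd ⁻¹' A1 : Set (Z × Z)) := measurable_snd hA1
    have hinter : (Prod.fst ⁻¹' A0) ∩ (Prod.snd ⁻¹' A1) = A0 ×ˢ A1 := by
      ext x; simp [Set.mem_prod]
    have key : π (Prod.fst ⁻¹' A0) + π (Prod.snd ⁻¹' A1)
        ≤ π (A0 ×ˢ A1) + π Set.univ := by
      rw [← measure_union_add_inter (Prod.fst ⁻¹' A0) hF, hinter, add_comm]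
      exact add_le_add le_rfl (measure_mono (Set.subset_univ _))
    have hEeq : π (Prod.fst ⁻¹' A0) = ν0 A0 := by
      rw [hν0, Measure.map_apply measurable_fst hA0]
    have hFeq : π (Prod.snd ⁻¹' A1) = ν1 A1 := by
      rw [hν1, Measure.map_apply measurable_snd hA1]
    rw [hEeq, hFeq] at key
    have h' := ENNReal.toReal_mono (by
      exact ENNReal.add_ne_top.2 ⟨measure_ne_top _ _, measure_ne_top _ _⟩) key
    rw [ENNReal.toReal_add (measure_ne_top _ _) (measure_ne_top _ _),
      ENNReal.toReal_add (measure_ne_top _ _) (measure_ne_top _ _)] at h'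
    simpa [e, f, p, m] using h'
  -- lower bound for muHalf S
  have hlow : p + 2⁻¹ * (a - e) + 2⁻¹ * (b - f) ≤ (muHalf μ0 μ1 π S).toReal := by
    have hEN : π (A0 ×ˢ A1) + 2⁻¹ * ((μ0 - ν0) A0) + 2⁻¹ * ((μ1 - ν1) A1)
        ≤ muHalf μ0 μ1 π S := by
      rw [hval]
      gcongr
    have hfin : muHalf μ0 μ1 π S ≠ ⊤ := by
      rw [hval]
      refine ENNReal.add_ne_top.2 ⟨ENNReal.add_ne_top.2 ⟨?_, ?_⟩, ?_⟩
      · exact (Measure.map_apply hmid hSmeas ▸ measure_ne_top _ _)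
      · exact ENNReal.mul_ne_top (by simp)
          (lt_of_le_of_lt (le_trans (measure_mono (Set.subset_univ _))
            (le_of_eq (hsub0 Set.univ MeasurableSet.univ))) (by
              exact lt_of_le_of_lt tsub_le_self (by simp [measure_lt_top]))).ne
      · exact ENNReal.mul_ne_top (by simp)
          (lt_of_le_of_lt (le_trans (measure_mono (Set.subset_univ _))
            (le_of_eq (hsub1 Set.univ MeasurableSet.univ))) (by
              exact lt_of_le_of_lt tsub_le_self (by simp [measure_lt_top]))).ne
    have h' := ENNReal.toReal_mono hfin hEN
    have hsne0 : (μ0 - ν0) A0 ≠ ⊤ := by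
      rw [hsub0 A0 hA0]; exact ENNReal.sub_ne_top hμ0A0ne
    have hsne1 : (μ1 - ν1) A1 ≠ ⊤ := by
      rw [hsub1 A1 hA1]; exact ENNReal.sub_ne_top hμ1A1ne
    rw [ENNReal.toReal_add (ENNReal.add_ne_top.2 ⟨measure_ne_top _ _,
        ENNReal.mul_ne_top (by simp) hsne0⟩) (ENNReal.mul_ne_top (by simp) hsne1),
      ENNReal.toReal_add (measure_ne_top _ _) (ENNReal.mul_ne_top (by simp) hsne0),
      ENNReal.toReal_mul, ENNReal.toReal_mul, hsub0 A0 hA0, hsub1 A1 hA1,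
      ENNReal.toReal_sub_of_le hea hμ0A0ne,
      ENNReal.toReal_sub_of_le hfb hμ1A1ne] at h'
    simpa [p, a, b, e, f] using h'
  have hm1 : m ≤ 1 := by
    have := ENNReal.toReal_mono (by simp) hπuniv
    simpa [m] using this
  linarith
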